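/- Fix real θ, φ with |θ| < π/2 and |φ| ≤ π/2 − |θ|. For real s > 0 set A(s) = (1/2)|sinh(2 s e^{iφ})|²·(cos 2θ + cos(2·arg(tanh(s e^{iφ})))) and N(s) = (√(1+A(s)) + √A(s))^{−1/2}. Then lim_{s → 0⁺} (N(s) − 1)/s = −√(cos(φ+θ)·cos(φ−θ)). (This is the short-time derivative of the norm ‖e^{−s e^{iφ} Q_θ}‖ via the formula of Theorem 1.1.) -/

import Mathlib

open Filter

lemma aux_sinh_div : Tendsto (fun z : ℂ => Complex.sinh z / z) (nhdsWithin 0 {(0:ℂ)}ᶜ) (nhds 1) := by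
  have h := Complex.hasDerivAt_sinh 0
  rw [hasDerivAt_iff_tendsto_slope] at h
  simpa [slope_fun_def, Complex.cosh_zero, Complex.sinh_zero, div_eq_inv_mul] using h

lemma aux_tanh_div : Tendsto (fun z : ℂ => Complex.tanh z / z) (nhdsWithin 0 {(0:ℂ)}ᶜ) (nhds 1) := by
  have heq : (fun z : ℂ => Complex.tanh z / z) = fun z : ℂ => (Complex.sinh z / z) / Complex.cosh z := by
    funext z; rw [Complex.tanh_eq_sinh_div_cosh, div_right_comm]
  rw [heq]
  have hc : Tendsto (fun z : ℂ => Complex.cosh z) (nhdsWithin 0 {(0:ℂ)}ᶜ) (nhds 1) := by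
    simpa using (Complex.continuous_cosh.tendsto 0).mono_left nhdsWithin_le_nhds
  have h := aux_sinh_div.div hc one_ne_zero
  rw [div_one] at h
  exact h

set_option maxHeartbeats 1000000 in
/-- short-time derivative of the norm: with
`A(s) = ½|sinh(2 s e^{iφ})|²(cos 2θ + cos(2 arg(tanh(s e^{iφ}))))` and
`N(s) = (√(1+A(s)) + √A(s))^{-1/2}`, one has
`(N(s) - 1)/s → -√(cos(φ+θ)cos(φ-θ))` as `s → 0⁺`. -/
theorem short_time_derivative
    (θ φ : ℝ) (hθ : |θ| < Real.pi / 2) (hφ : |φ| ≤ Real.pi / 2 - |θ|)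
    (A N : ℝ → ℝ)
    (hA : ∀ s : ℝ, A s = 1 / 2 *
        ‖Complex.sinh (2 * (s * Complex.exp (φ * Complex.I)))‖ ^ 2 *
        (Real.cos (2 * θ) +
          Real.cos (2 * Complex.arg (Complex.tanh (s * Complex.exp (φ * Complex.I))))))
    (hN : ∀ s : ℝ, N s = (Real.sqrt (1 + A s) + Real.sqrt (A s)) ^ (-(1 / 2) : ℝ)) :
    Tendsto (fun s : ℝ => (N s - 1) / s) (nhdsWithin 0 (Set.Ioi 0))
      (nhds (-Real.sqrt (Real.cos (φ + θ) * Real.cos (φ - θ)))) := by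
  set l := nhdsWithin (0:ℝ) (Set.Ioi 0) with hl_def
  set e : ℂ := Complex.exp (φ * Complex.I) with he_def
  have he : ‖e‖ = 1 := Complex.norm_exp_ofReal_mul_I φ
  have he0 : e ≠ 0 := by
    intro h; rw [h] at he; simp at he
  have hφπ : |φ| ≤ Real.pi / 2 := le_trans hφ (by linarith [abs_nonneg θ])
  have hpi := Real.pi_pos
  -- maps into punctured nbhd
  have hmap : Tendsto (fun s : ℝ => (s : ℂ) * e) l (nhdsWithin 0 {(0:ℂ)}ᶜ) := by
    apply tendsto_nhdsWithin_of_tendsto_nhds_of_eventually_within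
    · have : Continuous (fun s : ℝ => (s : ℂ) * e) := by continuity
      simpa using (this.tendsto 0).mono_left nhdsWithin_le_nhds
    · filter_upwards [self_mem_nhdsWithin] with s hs
      simp only [Set.mem_compl_iff, Set.mem_singleton_iff]
      exact mul_ne_zero (Complex.ofReal_ne_zero.mpr (ne_of_gt hs)) he0
  have hmap2 : Tendsto (fun s : ℝ => 2 * ((s : ℂ) * e)) l (nhdsWithin 0 {(0:ℂ)}ᶜ) := by
    apply tendsto_nhdsWithin_of_tendsto_nhds_of_eventually_within
    · have : Continuous (fun s : ℝ => 2 * ((s : ℂ) * e)) := by continuity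
      simpa using (this.tendsto 0).mono_left nhdsWithin_le_nhds
    · filter_upwards [self_mem_nhdsWithin] with s hs
      simp only [Set.mem_compl_iff, Set.mem_singleton_iff]
      exact mul_ne_zero two_ne_zero (mul_ne_zero (Complex.ofReal_ne_zero.mpr (ne_of_gt hs)) he0)
  -- |sinh(2 s e)|^2 / s^2 → 4
  have habs : Tendsto (fun s : ℝ => ‖Complex.sinh (2 * ((s:ℂ) * e)) / (2 * ((s:ℂ) * e))‖)
      l (nhds 1) := by
    have := (continuous_norm.tendsto (1:ℂ)).comp (aux_sinh_div.comp hmap2)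
    simpa only [norm_one, Function.comp_def] using this
  have hs1 : Tendsto (fun s : ℝ => ‖Complex.sinh (2 * ((s:ℂ) * e))‖ ^ 2 / s ^ 2)
      l (nhds 4) := by
    have h4 := (habs.const_mul 2).pow 2
    apply h4.congr' ?_ |>.mono_right ?_
    · filter_upwards [self_mem_nhdsWithin] with s hs
      have hw : ‖2 * ((s:ℂ) * e)‖ = 2 * s := by
        simp [he, abs_of_pos (show (0:ℝ) < s from hs)]
      rw [norm_div, hw]
      field_simp
    · norm_num
  -- arg(e) = φ, continuity of arg at e
  have hcosφ : 0 ≤ Real.cos φ := by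
    apply Real.cos_nonneg_of_mem_Icc
    constructor <;> [linarith [abs_le.mp hφπ |>.1]; linarith [abs_le.mp hφπ |>.2]]
  have hre : e.re = Real.cos φ := Complex.exp_ofReal_mul_I_re φ
  have him : e.im = Real.sin φ := Complex.exp_ofReal_mul_I_im φ
  have harg_e : Complex.arg e = φ := by
    rw [he_def, Complex.exp_mul_I]
    exact Complex.arg_cos_add_sin_mul_I (θ := φ) (Set.mem_Ioc.mpr ⟨by linarith [abs_le.mp hφπ |>.1], by linarith [abs_le.mp hφπ |>.2]⟩)
  have hcond : 0 < e.re ∨ e.im ≠ 0 := by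
    rcases lt_or_eq_of_le hcosφ with h | h
    · left; rw [hre]; exact h
    · right; rw [him]
      intro hsin
      have := Real.sin_sq_add_cos_sq φ
      rw [hsin, ← h] at this; norm_num at this
  -- tanh(se)/s → e
  have htarg : Tendsto (fun s : ℝ => Complex.tanh ((s:ℂ) * e) / (s:ℂ)) l (nhds e) := by
    have hcomp : Tendsto (fun s : ℝ => e * (Complex.tanh ((s:ℂ) * e) / ((s:ℂ) * e))) l (nhds (e * 1)) :=
      tendsto_const_nhds.mul ((aux_tanh_div.comp hmap))
    rw [mul_one] at hcomp
    apply hcomp.congr'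
    filter_upwards [self_mem_nhdsWithin] with s hs
    have hs0 : (s : ℂ) ≠ 0 := Complex.ofReal_ne_zero.mpr (ne_of_gt hs)
    field_simp
  have harg : Tendsto (fun s : ℝ => Complex.arg (Complex.tanh ((s:ℂ) * e))) l (nhds φ) := by
    have hc : Tendsto (fun s : ℝ => Complex.arg (Complex.tanh ((s:ℂ) * e) / (s:ℂ))) l (nhds φ) := by
      have := (Complex.continuousAt_arg hcond).tendsto.comp htarg
      rwa [harg_e] at this
    apply hc.congr'
    filter_upwards [self_mem_nhdsWithin] with s hs
    have hs0 : (s : ℂ) ≠ 0 := Complex.ofReal_ne_zero.mpr (ne_of_gt hs)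
    calc (Complex.tanh ((s:ℂ) * e) / (s:ℂ)).arg
        = (((s:ℝ) : ℂ) * (Complex.tanh ((s:ℂ) * e) / (s:ℂ))).arg := (Complex.arg_real_mul _ hs).symm
      _ = (Complex.tanh ((s:ℂ) * e)).arg := by
          congr 1
          field_simp
  have hs2 : Tendsto (fun s : ℝ => Real.cos (2 * Complex.arg (Complex.tanh ((s:ℂ) * e)))) l (nhds (Real.cos (2 * φ))) :=
    (Real.continuous_cos.tendsto _).comp (harg.const_mul 2)
  -- K and the identity
  set K := Real.cos (φ + θ) * Real.cos (φ - θ) with hKdef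
  have habs_pt : |φ + θ| ≤ Real.pi / 2 := by
    have := abs_add_le φ θ; linarith [abs_le.mp hφ |>.1, abs_le.mp hφ |>.2]
  have habs_mt : |φ - θ| ≤ Real.pi / 2 := by
    have := abs_sub φ θ; have h2 := abs_sub_abs_le_abs_sub φ θ
    calc |φ - θ| ≤ |φ| + |θ| := abs_sub φ θ
      _ ≤ Real.pi / 2 := by linarith
  have habs_pt' : |φ + θ| ≤ Real.pi / 2 := habs_pt
  have hK0 : 0 ≤ K := by
    apply mul_nonneg
    · exact Real.cos_nonneg_of_mem_Icc ⟨by linarith [abs_le.mp habs_pt |>.1], by linarith [abs_le.mp habs_pt |>.2]⟩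
    · exact Real.cos_nonneg_of_mem_Icc ⟨by linarith [abs_le.mp habs_mt |>.1], by linarith [abs_le.mp habs_mt |>.2]⟩
  have hid : Real.cos (2 * θ) + Real.cos (2 * φ) = 2 * K := by
    rw [Real.cos_add_cos, show (2*θ + 2*φ)/2 = φ + θ by ring, show (2*θ - 2*φ)/2 = -(φ - θ) by ring,
      Real.cos_neg, hKdef]
    ring
  -- A s / s^2 → 4K
  have h1 : Tendsto (fun s : ℝ => A s / s ^ 2) l (nhds (4 * K)) := by
    have hprod := (hs1.const_mul (1/2)).mul (hs2.const_add (Real.cos (2 * θ)))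
    have heq : ∀ s : ℝ, A s / s ^ 2 =
        (1/2 * (‖Complex.sinh (2 * ((s:ℂ) * e))‖ ^ 2 / s ^ 2)) *
        (Real.cos (2 * θ) + Real.cos (2 * Complex.arg (Complex.tanh ((s:ℂ) * e)))) := by
      intro s; rw [hA s]; ring
    have := hprod.congr (fun s => (heq s).symm)
    convert this using 2
    rw [hid]; ring
  have hsq : Tendsto (fun s : ℝ => s ^ 2) l (nhds 0) := by
    have : Continuous (fun s : ℝ => s ^ 2) := by continuity
    simpa using (this.tendsto 0).mono_left nhdsWithin_le_nhds
  have hself : Tendsto (fun s : ℝ => s) l (nhds 0) :=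
    tendsto_id.mono_left nhdsWithin_le_nhds
  -- A → 0
  have h2 : Tendsto A l (nhds 0) := by
    have := h1.mul hsq
    rw [mul_zero] at this
    apply this.congr'
    filter_upwards [self_mem_nhdsWithin] with s hs
    exact div_mul_cancel₀ _ (pow_ne_zero 2 (ne_of_gt hs))
  -- √A / s → 2√K
  have h3 : Tendsto (fun s : ℝ => Real.sqrt (A s) / s) l (nhds (2 * Real.sqrt K)) := by
    have hc := (Real.continuous_sqrt.tendsto (4 * K)).comp h1
    have h4K : Real.sqrt (4 * K) = 2 * Real.sqrt K := by
      rw [Real.sqrt_mul (by norm_num : (0:ℝ) ≤ 4), show Real.sqrt 4 = 2 by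
        rw [show (4:ℝ) = 2^2 by norm_num, Real.sqrt_sq (by norm_num : (0:ℝ) ≤ 2)]]
    rw [Function.comp_def, h4K] at hc
    apply hc.congr'
    filter_upwards [self_mem_nhdsWithin] with s hs
    rcases le_or_gt 0 (A s) with h | h
    · rw [Real.sqrt_div h, Real.sqrt_sq hs.le]
    · rw [Real.sqrt_eq_zero_of_nonpos h.le, Real.sqrt_eq_zero_of_nonpos
        (le_of_lt (div_neg_of_neg_of_pos h (pow_pos hs 2))), zero_div]
  -- A / s → 0
  have h4 : Tendsto (fun s : ℝ => A s / s) l (nhds 0) := by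
    have := h1.mul hself
    rw [mul_zero] at this
    apply this.congr'
    filter_upwards [self_mem_nhdsWithin] with s hs
    have hs0 : s ≠ 0 := ne_of_gt hs
    field_simp
  -- u = √(1+A) + √A → 1
  have hu1 : Tendsto (fun s : ℝ => Real.sqrt (1 + A s)) l (nhds 1) := by
    have := (Real.continuous_sqrt.tendsto 1).comp (show Tendsto (fun s => 1 + A s) l (nhds 1) by
      simpa using h2.const_add 1)
    simpa [Function.comp_def] using this
  have hu0 : Tendsto (fun s : ℝ => Real.sqrt (A s)) l (nhds 0) := by
    have := (Real.continuous_sqrt.tendsto 0).comp h2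
    simpa [Function.comp_def] using this
  have hu : Tendsto (fun s : ℝ => Real.sqrt (1 + A s) + Real.sqrt (A s)) l (nhds 1) := by
    have := hu1.add hu0
    simpa using this
  -- (u - 1)/s → 2√K
  have h6 : Tendsto (fun s : ℝ => (Real.sqrt (1 + A s) + Real.sqrt (A s) - 1) / s) l
      (nhds (2 * Real.sqrt K)) := by
    have hinv : Tendsto (fun s : ℝ => (Real.sqrt (1 + A s) + 1)⁻¹) l (nhds ((1:ℝ)/2)) := by
      have h := (hu1.add (tendsto_const_nhds (x := (1:ℝ)))).inv₀ (by norm_num : (1:ℝ) + 1 ≠ 0)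
      norm_num at h
      exact h
    have hsum := (h4.mul hinv).add h3
    rw [zero_mul, zero_add] at hsum
    apply hsum.congr'
    filter_upwards [h2.eventually (eventually_gt_nhds (by norm_num : (-1:ℝ) < 0)),
      self_mem_nhdsWithin] with s hAs hs
    have h1A : (0:ℝ) < 1 + A s := by linarith
    have hsq' : Real.sqrt (1 + A s) ^ 2 = 1 + A s := Real.sq_sqrt h1A.le
    have hd : Real.sqrt (1 + A s) + 1 ≠ 0 := by positivity
    have hq : Real.sqrt (1 + A s) - 1 = A s / (Real.sqrt (1 + A s) + 1) := by
      rw [eq_div_iff hd]; nlinarith [hsq']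
    rw [show Real.sqrt (1 + A s) + Real.sqrt (A s) - 1
        = (Real.sqrt (1 + A s) - 1) + Real.sqrt (A s) by ring, hq, add_div]
    congr 1
    rw [div_mul_eq_mul_div, ← div_eq_mul_inv, div_div]
  -- final assembly
  have hupos : ∀ᶠ s in l, 0 < Real.sqrt (1 + A s) + Real.sqrt (A s) := by
    filter_upwards [h2.eventually (eventually_gt_nhds (by norm_num : (-1:ℝ) < 0))] with s hAs
    have h1A : (0:ℝ) < 1 + A s := by linarith
    have := Real.sqrt_pos.mpr h1A
    have := Real.sqrt_nonneg (A s)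
    linarith
  have hden : Tendsto (fun s : ℝ =>
      Real.sqrt (Real.sqrt (1 + A s) + Real.sqrt (A s)) *
        (1 + Real.sqrt (Real.sqrt (1 + A s) + Real.sqrt (A s)))) l (nhds 2) := by
    have hs1' : Tendsto (fun s : ℝ => Real.sqrt (Real.sqrt (1 + A s) + Real.sqrt (A s))) l (nhds 1) := by
      have := (Real.continuous_sqrt.tendsto 1).comp hu
      simpa [Function.comp_def] using this
    have := hs1'.mul (hs1'.const_add 1)
    norm_num at this
    exact this
  refine ((h6.neg.div hden (by norm_num)).congr' ?_).mono_right ?_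
  · filter_upwards [hupos, self_mem_nhdsWithin] with s hus hs
    set u := Real.sqrt (1 + A s) + Real.sqrt (A s) with hu_def
    have hru : 0 < Real.sqrt u := Real.sqrt_pos.mpr hus
    have hrusq : Real.sqrt u ^ 2 = u := Real.sq_sqrt hus.le
    have hNval : N s = (Real.sqrt u)⁻¹ := by
      rw [hN s, Real.rpow_neg hus.le, ← Real.sqrt_eq_rpow]
    simp only [Pi.div_apply]
    rw [hNval, ← hu_def, show u - 1 = Real.sqrt u ^ 2 - 1 by rw [hrusq]]
    have hs0 : s ≠ 0 := ne_of_gt hs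
    have h1u : 1 + Real.sqrt u ≠ 0 := by positivity
    field_simp [hs0, hru.ne', h1u]
    ring
  · rw [show -(2 * Real.sqrt K) / 2 = -Real.sqrt K by ring]
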